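/- For all A, B ∈ M₃(F), setting a := det(A), b := tr(A^#·B), c := tr(A·B^#), d := det(B), one has det(3·(A^# × B^#) − c·A − b·B) = −27a²d² + 18abcd + b²c² − 4ac³ − 4b³d; that is, the determinant of 3·(A^#×B^#) − tr(A·B^#)·A − tr(A^#·B)·B equals the discriminant of the binary cubic form n(Ax+By) = a·x³ + b·x²y + c·xy² + d·y³. -/

import Mathlib

open Matrix

noncomputable section

variable {F : Type*} [Field F]

/-- The linearization `x × y := (x+y)^# - x^# - y^#` of the adjugate. -/
def xmul (x y : Matrix (Fin 3) (Fin 3) F) : Matrix (Fin 3) (Fin 3) F :=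
  (x + y).adjugate - x.adjugate - y.adjugate

section Aux

variable {R S : Type*} [CommRing R] [CommRing S]

/-- The matrix `3·(A^#×B^#) − tr(A·B^#)·A − tr(A^#·B)·B`, over any commutative ring. -/
def auxNN (A B : Matrix (Fin 3) (Fin 3) R) : Matrix (Fin 3) (Fin 3) R :=
  (3 : R) • ((A.adjugate + B.adjugate).adjugate - A.adjugate.adjugate - B.adjugate.adjugate)
    - (A * B.adjugate).trace • A - (A.adjugate * B).trace • B

/-- The discriminant of the binary cubic `n(Ax+By)`. -/
def auxRR (A B : Matrix (Fin 3) (Fin 3) R) : R :=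
  -27 * A.det ^ 2 * B.det ^ 2
    + 18 * A.det * (A.adjugate * B).trace * (A * B.adjugate).trace * B.det
    + (A.adjugate * B).trace ^ 2 * (A * B.adjugate).trace ^ 2
    - 4 * A.det * (A * B.adjugate).trace ^ 3
    - 4 * (A.adjugate * B).trace ^ 3 * B.det

theorem aux_xmul_one (X : Matrix (Fin 3) (Fin 3) R) :
    (1 + X).adjugate - (1 : Matrix (Fin 3) (Fin 3) R) - X.adjugate = X.trace • 1 - X := by
  ext i j
  fin_cases i <;> fin_cases j <;>
    simp [adjugate_fin_three, Matrix.add_apply, Matrix.one_apply, trace_fin_three,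
      Matrix.sub_apply, Matrix.smul_apply] <;> ring

set_option maxHeartbeats 1000000 in
theorem aux_core (B : Matrix (Fin 3) (Fin 3) R) : (auxNN 1 B).det = auxRR 1 B := by
  unfold auxNN auxRR
  simp only [adjugate_one, Matrix.one_mul, det_one]
  rw [aux_xmul_one]
  rw [det_fin_three]
  simp only [Matrix.sub_apply, Matrix.smul_apply, Matrix.one_apply, smul_eq_mul,
    Fin.reduceEq, reduceIte, Fin.isValue,
    trace_fin_three, det_fin_three, adjugate_fin_three, Matrix.cons_val', Matrix.cons_val_zero,
    Matrix.cons_val_one, Matrix.head_cons, Matrix.empty_val', Matrix.cons_val_fin_one,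
    Matrix.head_fin_const]
  norm_num
  simp only [Matrix.cons_val]
  ring

theorem aux_adjugate_map (f : R →+* S) (M : Matrix (Fin 3) (Fin 3) R) :
    (M.map f).adjugate = M.adjugate.map f := by
  rw [← RingHom.mapMatrix_apply, ← RingHom.map_adjugate, RingHom.mapMatrix_apply]

theorem aux_trace_map (f : R →+* S) (M : Matrix (Fin 3) (Fin 3) R) :
    (M.map f).trace = f M.trace := by
  simp [Matrix.trace, Matrix.diag, Matrix.map_apply, map_sum]

theorem aux_det_map (f : R →+* S) (M : Matrix (Fin 3) (Fin 3) R) :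
    (M.map f).det = f M.det := by
  rw [← RingHom.mapMatrix_apply, ← RingHom.map_det]

theorem aux_mul_map (f : R →+* S) (M N : Matrix (Fin 3) (Fin 3) R) :
    (M * N).map f = M.map f * N.map f := by
  rw [← RingHom.mapMatrix_apply, ← RingHom.mapMatrix_apply, ← RingHom.mapMatrix_apply,
    _root_.map_mul]

theorem aux_add_map (f : R →+* S) (M N : Matrix (Fin 3) (Fin 3) R) :
    (M + N).map f = M.map f + N.map f := by
  ext i j; simp [Matrix.map_apply]

theorem aux_sub_map (f : R →+* S) (M N : Matrix (Fin 3) (Fin 3) R) :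
    (M - N).map f = M.map f - N.map f := by
  ext i j; simp [Matrix.map_apply]

theorem aux_smul_map (f : R →+* S) (r : R) (M : Matrix (Fin 3) (Fin 3) R) :
    ((r • M : Matrix (Fin 3) (Fin 3) R)).map f = f r • M.map f := by
  ext i j; simp [Matrix.map_apply]

theorem auxNN_map (f : R →+* S) (A B : Matrix (Fin 3) (Fin 3) R) :
    auxNN (A.map f) (B.map f) = (auxNN A B).map f := by
  simp only [auxNN, aux_sub_map, aux_add_map, aux_smul_map, aux_mul_map, ← aux_adjugate_map,
    ← aux_trace_map, map_ofNat]

theorem auxRR_map (f : R →+* S) (A B : Matrix (Fin 3) (Fin 3) R) :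
    auxRR (A.map f) (B.map f) = f (auxRR A B) := by
  simp only [auxRR, _root_.map_add, _root_.map_sub, _root_.map_mul, map_pow, map_neg,
    map_ofNat, ← aux_det_map, ← aux_trace_map, aux_mul_map, ← aux_adjugate_map]

end Aux

section Inv

variable {K : Type*} [Field K]

theorem aux_inv (A B : Matrix (Fin 3) (Fin 3) K) (hA : A.det ≠ 0) :
    (auxNN A B).det = auxRR A B := by
  have hU : IsUnit A.det := hA.isUnit
  set g := A⁻¹ with hg
  have h1 : g * A = 1 := nonsing_inv_mul A hU
  have h1' : A * g = 1 := mul_nonsing_inv A hU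
  have hdetg : g.det = A.det⁻¹ := by rw [hg, det_nonsing_inv, Ring.inverse_eq_inv']
  have hadjg : g.adjugate = g.det • A := by
    calc g.adjugate = (A * g) * g.adjugate := by rw [h1', Matrix.one_mul]
    _ = A * (g * g.adjugate) := by rw [Matrix.mul_assoc]
    _ = A * (g.det • 1) := by rw [mul_adjugate]
    _ = g.det • A := by rw [Matrix.mul_smul, Matrix.mul_one]
  have hgadjA : g = g.det • A.adjugate := by
    rw [hdetg, hg, inv_def, Ring.inverse_eq_inv']
  have e2 : A.adjugate * g.adjugate = 1 := by
    rw [← adjugate_mul_distrib, h1, adjugate_one]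
  have htrb : (g * B).trace = g.det * (A.adjugate * B).trace := by
    rw [hgadjA, Matrix.smul_mul, trace_smul, smul_eq_mul, ← hgadjA]
  have htrc : ((g * B).adjugate).trace = g.det * (A * B.adjugate).trace := by
    rw [adjugate_mul_distrib, hadjg, Matrix.mul_smul, trace_smul, smul_eq_mul, trace_mul_comm]
  have hNN : auxNN 1 (g * B) = g.det • (g * auxNN A B) := by
    unfold auxNN
    simp only [adjugate_one, Matrix.one_mul]
    rw [adjugate_adjugate (g * B) (by simp), det_mul]
    rw [htrc, htrb]
    rw [show (1 : Matrix (Fin 3) (Fin 3) K) + (g * B).adjugate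
        = (A.adjugate + B.adjugate) * g.adjugate from by
      rw [Matrix.add_mul, e2, ← adjugate_mul_distrib]]
    rw [adjugate_mul_distrib (A.adjugate + B.adjugate) g.adjugate]
    rw [adjugate_adjugate g (by simp), adjugate_adjugate A (by simp),
      adjugate_adjugate B (by simp)]
    simp only [Fintype.card_fin, Nat.reduceSub, pow_one]
    simp only [Matrix.mul_sub, Matrix.mul_smul, Matrix.smul_mul, smul_sub, smul_smul, h1]
    rw [hdetg]
    match_scalars <;> field_simp [hA]
  have hu : g.det * A.det = 1 := det_nonsing_inv_mul_det A hU
  have h6 : (auxNN 1 (g * B)).det = g.det ^ 4 * (auxNN A B).det := by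
    rw [hNN, det_smul, det_mul]
    simp only [Fintype.card_fin]
    ring
  have h5 : auxRR 1 (g * B) = g.det ^ 4 * auxRR A B := by
    unfold auxRR
    simp only [det_one, adjugate_one, Matrix.one_mul]
    rw [htrb, htrc, det_mul]
    linear_combination (27 * g.det ^ 2 * B.det ^ 2 * (1 + g.det * A.det)
      - 18 * g.det ^ 3 * (A.adjugate * B).trace * (A * B.adjugate).trace * B.det
      + 4 * g.det ^ 3 * (A * B.adjugate).trace ^ 3) * hu
  have hcore := aux_core (g * B)
  refine mul_left_cancel₀ (pow_ne_zero 4 (left_ne_zero_of_mul_eq_one hu)) ?_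
  rw [← h6, hcore, h5]

end Inv

/-- the determinant of `3·(A^# × B^#) − tr(A·B^#)·A − tr(A^#·B)·B` equals the
discriminant `−27a²d² + 18abcd + b²c² − 4ac³ − 4b³d` of the binary cubic `n(Ax + By)`. -/
theorem statement11 [CharZero F] (A B : Matrix (Fin 3) (Fin 3) F) :
    ((3 : F) • xmul A.adjugate B.adjugate
        - (A * B.adjugate).trace • A - (A.adjugate * B).trace • B).det
      = -27 * A.det ^ 2 * B.det ^ 2
          + 18 * A.det * (A.adjugate * B).trace * (A * B.adjugate).trace * B.det
          + (A.adjugate * B).trace ^ 2 * (A * B.adjugate).trace ^ 2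
          - 4 * A.det * (A * B.adjugate).trace ^ 3
          - 4 * (A.adjugate * B).trace ^ 3 * B.det := by
  show (auxNN A B).det = auxRR A B
  classical
  set R := Polynomial F with hR
  let K := FractionRing R
  let f : R →+* K := algebraMap R K
  set A' : Matrix (Fin 3) (Fin 3) R := charmatrix (-A) with hA'def
  set B' : Matrix (Fin 3) (Fin 3) R := B.map Polynomial.C with hB'def
  have hA' : A'.det ≠ 0 := by
    have : A'.det = (-A).charpoly := rfl
    rw [this]
    exact (Matrix.charpoly_monic _).ne_zero
  have hinj : Function.Injective f := IsFractionRing.injective R K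
  have hKdet : (A'.map f).det ≠ 0 := by
    rw [aux_det_map]
    intro h
    exact hA' (hinj (by simpa using h))
  have hK := aux_inv (A'.map f) (B'.map f) hKdet
  have h1 : f ((auxNN A' B').det) = f (auxRR A' B') := by
    rw [← aux_det_map, ← auxNN_map, hK, auxRR_map]
  have h2 : (auxNN A' B').det = auxRR A' B' := hinj h1
  have hA0 : A'.map (Polynomial.evalRingHom (0 : F)) = A := by
    ext i j
    by_cases h : i = j
    · subst h; simp [hA'def, charmatrix_apply_eq, Matrix.map_apply]
    · simp [hA'def, h, Matrix.map_apply]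
  have hB0 : B'.map (Polynomial.evalRingHom (0 : F)) = B := by
    ext i j; simp [hB'def, Matrix.map_apply]
  calc (auxNN A B).det
      = (auxNN (A'.map (Polynomial.evalRingHom (0 : F)))
          (B'.map (Polynomial.evalRingHom (0 : F)))).det := by rw [hA0, hB0]
    _ = (Polynomial.evalRingHom (0 : F)) ((auxNN A' B').det) := by
        rw [auxNN_map, aux_det_map]
    _ = (Polynomial.evalRingHom (0 : F)) (auxRR A' B') := by rw [h2]
    _ = auxRR (A'.map (Polynomial.evalRingHom (0 : F)))
          (B'.map (Polynomial.evalRingHom (0 : F))) := by rw [auxRR_map]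
    _ = auxRR A B := by rw [hA0, hB0]
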